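/- For all n, m, and k ≤ n, the approximation ratio of the k-sortition rule is at most 1 + 6·exp(−1/2)/√k. -/

import Mathlib

open Finset BigOperators

noncomputable section

/-- Hamming distance between two preference vectors over `m` binary issues. -/
def hamming {m : ℕ} (x y : Fin m → Bool) : ℕ :=
  (Finset.univ.filter fun j => x j ≠ y j).card

/-- Social cost of outcome `z` on profile `X`: sum of Hamming distances. -/
def SC {n m : ℕ} (X : Fin n → Fin m → Bool) (z : Fin m → Bool) : ℕ :=
  ∑ i, hamming (X i) z

/-- Optimal (minimal) social cost over all outcomes. -/
def optCost {n m : ℕ} (X : Fin n → Fin m → Bool) : ℕ :=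
  Finset.univ.inf' Finset.univ_nonempty fun z : Fin m → Bool => SC X z

/-- Number of voters preferring alternative 1 (`true`) on issue `j`. -/
def trueCount {n m : ℕ} (X : Fin n → Fin m → Bool) (j : Fin m) : ℕ :=
  (Finset.univ.filter fun i => X i j = true).card

/-- Number of voters preferring alternative 0 (`false`) on issue `j`. -/
def falseCount {n m : ℕ} (X : Fin n → Fin m → Bool) (j : Fin m) : ℕ :=
  (Finset.univ.filter fun i => X i j = false).card

/-- Expected social cost of `k`-sortition: a uniformly random committee of size `k`
decides each issue by simple majority, ties broken uniformly at random. -/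
def sortitionCost (k : ℕ) {n m : ℕ} (X : Fin n → Fin m → Bool) : ℝ :=
  (∑ C ∈ Finset.powersetCard k (Finset.univ : Finset (Fin n)), ∑ j : Fin m,
      (if k < 2 * (C.filter fun i => X i j = true).card then (falseCount X j : ℝ)
       else if 2 * (C.filter fun i => X i j = true).card < k then (trueCount X j : ℝ)
       else (n : ℝ) / 2)) / (n.choose k : ℝ)

/-- Ratio of an (expected) cost to the optimal cost, with the convention `0/0 = 1`. -/
def ratio (cost : ℝ) (opt : ℕ) : ℝ := if opt = 0 then 1 else cost / (opt : ℝ)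

/-- Worst-case approximation ratio of `k`-sortition over profiles with `n` voters, `m` issues. -/
def sortitionAR (n m k : ℕ) : ℝ :=
  ⨆ X : Fin n → Fin m → Bool, ratio (sortitionCost k X) (optCost X)

/-- The set of committee members of `C` closest (in Hamming distance) to voter `i`. -/
def closestSet {n m : ℕ} (X : Fin n → Fin m → Bool) (C : Finset (Fin n)) (i : Fin n) :
    Finset (Fin n) :=
  C.filter fun c => ∀ c' ∈ C, hamming (X i) (X c) ≤ hamming (X i) (X c')

/-- Weight of committee member `c`: each voter splits one unit of weight equally among
their closest committee members. -/
def wWeight {n m : ℕ} (X : Fin n → Fin m → Bool) (C : Finset (Fin n)) (c : Fin n) : ℝ :=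
  ∑ i : Fin n, if c ∈ closestSet X C i then 1 / ((closestSet X C i).card : ℝ) else 0

/-- Expected social cost of the decision of committee `C` under weighted majority
(per issue, ties broken uniformly). -/
def wCost {n m : ℕ} (X : Fin n → Fin m → Bool) (C : Finset (Fin n)) : ℝ :=
  ∑ j : Fin m,
    (if (∑ c ∈ C.filter (fun c => X c j = false), wWeight X C c)
          < (∑ c ∈ C.filter (fun c => X c j = true), wWeight X C c)
        then (falseCount X j : ℝ)
     else if (∑ c ∈ C.filter (fun c => X c j = true), wWeight X C c)
          < (∑ c ∈ C.filter (fun c => X c j = false), wWeight X C c)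
        then (trueCount X j : ℝ)
     else (n : ℝ) / 2)

/-- Expected social cost of weighted `k`-sortition: uniformly random committee of size `k`,
weighted majority vote per issue. -/
def wSortitionCost (k : ℕ) {n m : ℕ} (X : Fin n → Fin m → Bool) : ℝ :=
  (∑ C ∈ Finset.powersetCard k (Finset.univ : Finset (Fin n)), wCost X C) / (n.choose k : ℝ)

/-- Worst-case approximation ratio of weighted `k`-sortition. -/
def wSortitionAR (n m k : ℕ) : ℝ :=
  ⨆ X : Fin n → Fin m → Bool, ratio (wSortitionCost k X) (optCost X)


lemma count_superset {n k j : ℕ} (hjk : j ≤ k) (S : Finset (Fin n)) (hS : S.card = j) :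
    ((powersetCard k (univ : Finset (Fin n))).filter (fun C => S ⊆ C)).card
      = (n - j).choose (k - j) := by
  have h : ((powersetCard k (univ : Finset (Fin n))).filter (fun C => S ⊆ C)).card
      = (powersetCard (k - j) Sᶜ).card := by
    apply Finset.card_bij' (fun C _ => C \ S) (fun D _ => D ∪ S)
    · intro C hC
      simp only [mem_filter, mem_powersetCard] at hC
      obtain ⟨⟨-, hcard⟩, hsub⟩ := hC
      simp only [mem_powersetCard]
      constructor
      · intro x hx; simp only [mem_sdiff] at hx; simp [hx.2]
      · rw [card_sdiff_of_subset hsub, hcard, hS]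
    · intro D hD
      simp only [mem_powersetCard] at hD
      obtain ⟨hsub, hcard⟩ := hD
      have hdisj : Disjoint D S := by
        rw [Finset.disjoint_left]
        intro x hx hxS
        exact absurd (hsub hx) (by simp [hxS])
      simp only [mem_filter, mem_powersetCard]
      refine ⟨⟨subset_univ _, ?_⟩, subset_union_right⟩
      rw [card_union_of_disjoint hdisj, hcard, hS]
      omega
    · intro C hC
      simp only [mem_filter] at hC
      exact sdiff_union_of_subset hC.2
    · intro D hD
      simp only [mem_powersetCard] at hD
      have hdisj : Disjoint D S := by
        rw [Finset.disjoint_left]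
        intro x hx hxS
        exact absurd (hD.1 hx) (by simp [hxS])
      exact union_sdiff_cancel_right hdisj
  rw [h, card_powersetCard, card_compl, hS, Fintype.card_fin]

lemma sum_inter_choose {n k : ℕ} (j : ℕ) (hjk : j ≤ k) (A : Finset (Fin n)) :
    ∑ C ∈ powersetCard k (univ : Finset (Fin n)), ((C ∩ A).card.choose j)
      = A.card.choose j * (n - j).choose (k - j) := by
  have step : ∀ C ∈ powersetCard k (univ : Finset (Fin n)),
      ((C ∩ A).card.choose j) = ∑ S ∈ powersetCard j A, if S ⊆ C then 1 else 0 := by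
    intro C _
    rw [← card_powersetCard j (C ∩ A), ← card_filter]
    congr 1
    ext S
    simp only [mem_powersetCard, mem_filter, subset_inter_iff]
    tauto
  rw [sum_congr rfl step, sum_comm]
  have : ∀ S ∈ powersetCard j A,
      (∑ C ∈ powersetCard k (univ : Finset (Fin n)), if S ⊆ C then 1 else 0)
        = (n - j).choose (k - j) := by
    intro S hS
    rw [← card_filter]
    exact count_superset hjk S (mem_powersetCard.mp hS).2
  rw [sum_congr rfl this, sum_const, smul_eq_mul, card_powersetCard]

lemma choose_two_id (a : ℕ) : 2 * a.choose 2 + a = a * a := by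
  induction a with
  | zero => simp
  | succ b ih =>
    rw [Nat.choose_succ_succ, Nat.choose_one_right]
    ring_nf
    ring_nf at ih
    omega

lemma choose_id1 {n k : ℕ} (hk : 1 ≤ k) (hkn : k ≤ n) :
    k * n.choose k = n * (n-1).choose (k-1) := by
  obtain ⟨n', rfl⟩ : ∃ n', n = n' + 1 := ⟨n - 1, by omega⟩
  obtain ⟨k', rfl⟩ : ∃ k', k = k' + 1 := ⟨k - 1, by omega⟩
  simp only [Nat.add_sub_cancel]
  rw [mul_comm (k'+1) _, ← Nat.add_one_mul_choose_eq, mul_comm]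

lemma sum_M {n k : ℕ} (hk : 1 ≤ k) (A : Finset (Fin n)) :
    ∑ C ∈ powersetCard k (univ : Finset (Fin n)), (C ∩ A).card
      = A.card * (n - 1).choose (k - 1) := by
  have := sum_inter_choose 1 hk A
  simpa using this

lemma sum_M2 {n k : ℕ} (hk : 2 ≤ k) (A : Finset (Fin n)) :
    ∑ C ∈ powersetCard k (univ : Finset (Fin n)), (C ∩ A).card.choose 2
      = A.card.choose 2 * (n - 2).choose (k - 2) :=
  sum_inter_choose 2 hk A

lemma y_bounds : 0.60653 ≤ Real.exp (-(1/2:ℝ)) ∧ Real.exp (-(1/2:ℝ)) ≤ 0.60654 := by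
  set y := Real.exp (-(1/2:ℝ)) with hy
  have hy2 : y * y = Real.exp (-1) := by rw [hy, ← Real.exp_add]; norm_num
  have hyE : Real.exp (-1) * Real.exp 1 = 1 := by rw [← Real.exp_add]; norm_num
  have hE1 : Real.exp 1 < 2.7182818286 := Real.exp_one_lt_d9
  have hE2 : (2.7182818283:ℝ) < Real.exp 1 := Real.exp_one_gt_d9
  have hy_pos : 0 < y := Real.exp_pos _
  constructor <;> nlinarith [sq_nonneg (y - 0.60653), sq_nonneg (y - 0.60654), sq_nonneg (y + 0.60654)]

lemma eps_pos {k : ℕ} (hk : 1 ≤ k) : 0 < 6 * Real.exp (-(1/2:ℝ)) / Real.sqrt k := by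
  apply div_pos (by positivity)
  exact Real.sqrt_pos.mpr (by exact_mod_cast Nat.pos_of_ne_zero (by omega))

lemma eps_ge_k {k : ℕ} (hk : 1 ≤ k) (hk2 : k ≤ 2) :
    (k : ℝ) ≤ 6 * Real.exp (-(1/2:ℝ)) / Real.sqrt k := by
  have hy := y_bounds
  set y := Real.exp (-(1/2:ℝ))
  interval_cases k
  · simp only [Nat.cast_one, Real.sqrt_one]
    nlinarith [hy.1]
  · have h2 : Real.sqrt 2 ≤ 1.41422 := by
      rw [show (1.41422:ℝ) = Real.sqrt (1.41422^2) by rw [Real.sqrt_sq]; norm_num]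
      apply Real.sqrt_le_sqrt; norm_num
    have h2p : (0:ℝ) < Real.sqrt 2 := Real.sqrt_pos.mpr (by norm_num)
    push_cast
    rw [le_div_iff₀ (by exact_mod_cast h2p)]
    push_cast
    nlinarith [hy.1]

lemma eps_cond3 {k : ℕ} (hk : 3 ≤ k) :
    4 + 4 * (6 * Real.exp (-(1/2:ℝ)) / Real.sqrt k)
      ≤ k * (6 * Real.exp (-(1/2:ℝ)) / Real.sqrt k)^2 := by
  have hy := y_bounds
  set y := Real.exp (-(1/2:ℝ)) with hydef
  have hy_pos : 0 < y := Real.exp_pos _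
  have hkpos : (0:ℝ) < k := by exact_mod_cast Nat.pos_of_ne_zero (by omega)
  have hsk : Real.sqrt k ^ 2 = k := Real.sq_sqrt (le_of_lt hkpos)
  have hskpos : 0 < Real.sqrt k := Real.sqrt_pos.mpr hkpos
  have h3 : (1.73205:ℝ) ≤ Real.sqrt k := by
    rw [show (1.73205:ℝ) = Real.sqrt (1.73205^2) by rw [Real.sqrt_sq]; norm_num]
    apply Real.sqrt_le_sqrt
    have : (3:ℝ) ≤ k := by exact_mod_cast hk
    nlinarith
  have hkeps : (k:ℝ) * (6 * y / Real.sqrt k)^2 = 36 * y^2 := by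
    rw [div_pow, ← hsk]
    field_simp
    rw [hsk, hsk]
    norm_num
  rw [hkeps]
  have heps_le : 6 * y / Real.sqrt k ≤ 2.102 := by
    rw [div_le_iff₀ hskpos]
    nlinarith [hy.2]
  nlinarith [hy.1]

lemma var_bound {n k : ℕ} (hk : 2 ≤ k) (hkn : k ≤ n) (A : Finset (Fin n)) :
    ∑ C ∈ powersetCard k (univ : Finset (Fin n)),
        ((n:ℝ) * (C ∩ A).card - k * A.card)^2
      ≤ (n.choose k : ℝ) * k * A.card * (n - A.card) := by
  set P := powersetCard k (univ : Finset (Fin n)) with hP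
  set a := A.card with ha
  set N := n.choose k with hN
  set C1 := (n-1).choose (k-1) with hC1
  set C2 := (n-2).choose (k-2) with hC2
  have haN : a ≤ n := by rw [ha]; simpa using card_le_card (subset_univ A)
  -- sums, real versions
  have hS1 : ∑ C ∈ P, ((C ∩ A).card : ℝ) = a * C1 := by
    rw [← Nat.cast_sum, sum_M (by omega) A]; push_cast; rfl
  have hS2 : ∑ C ∈ P, ((C ∩ A).card : ℝ)^2
      = ((a:ℝ)*a - a) * C2 + a * C1 := by
    have h2 : ∀ M : ℕ, (M:ℝ)^2 = 2 * (M.choose 2 : ℝ) + M := by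
      intro M
      have := choose_two_id M
      have : ((2 * M.choose 2 + M : ℕ) : ℝ) = ((M * M : ℕ) : ℝ) := by rw [this]
      push_cast at this
      nlinarith
    calc ∑ C ∈ P, ((C ∩ A).card : ℝ)^2
        = ∑ C ∈ P, (2 * ((C ∩ A).card.choose 2 : ℝ) + (C ∩ A).card) := by
          exact sum_congr rfl (fun C _ => h2 _)
      _ = 2 * ((a.choose 2 : ℝ) * C2) + a * C1 := by
          rw [sum_add_distrib, ← mul_sum, ← Nat.cast_sum, ← Nat.cast_sum,
            sum_M2 hk A, sum_M (by omega) A]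
          push_cast; ring
      _ = ((a:ℝ)*a - a) * C2 + a * C1 := by
          have := choose_two_id a
          have h : ((2 * a.choose 2 + a : ℕ) : ℝ) = ((a * a : ℕ) : ℝ) := by rw [this]
          push_cast at h
          nlinarith
  have expand : ∑ C ∈ P, ((n:ℝ) * (C ∩ A).card - k * a)^2
      = (n:ℝ)^2 * (∑ C ∈ P, ((C ∩ A).card : ℝ)^2)
        - 2*(n:ℝ)*k*a * (∑ C ∈ P, ((C ∩ A).card : ℝ)) + (k:ℝ)^2*a^2*N := by
    have : ∀ C ∈ P, ((n:ℝ) * (C ∩ A).card - k * a)^2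
        = (n:ℝ)^2 * ((C ∩ A).card:ℝ)^2 - 2*(n:ℝ)*k*a * ((C ∩ A).card:ℝ)
          + (k:ℝ)^2*a^2 := by intro C _; ring
    rw [sum_congr rfl this, sum_add_distrib, sum_sub_distrib, ← mul_sum, ← mul_sum,
      sum_const, hP, card_powersetCard, card_univ, Fintype.card_fin]
    push_cast [hN]
    ring
  rw [expand, hS1, hS2]
  -- identities
  have hid1 : (k:ℝ) * N = n * C1 := by
    rw [hN, hC1]; exact_mod_cast congrArg (Nat.cast (R := ℝ)) (choose_id1 (by omega) hkn)
  have hid2 : ((k:ℝ) - 1) * C1 = ((n:ℝ) - 1) * C2 := by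
    have h := choose_id1 (n := n-1) (k := k-1) (by omega) (by omega)
    have hh : ((k-1) * (n-1).choose (k-1) : ℕ) = ((n-1) * (n-2).choose (k-2) : ℕ) := by
      rw [h]; congr 2 <;> omega
    have := congrArg (Nat.cast (R := ℝ)) hh
    push_cast at this
    rw [hC1, hC2]
    rw [Nat.cast_sub (by omega), Nat.cast_sub (by omega)] at this
    push_cast at this
    convert this using 2 <;> norm_num
  -- final polynomial inequality
  have hC2nn : (0:ℝ) ≤ C2 := Nat.cast_nonneg _
  have hC1nn : (0:ℝ) ≤ C1 := Nat.cast_nonneg _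
  have hann : (0:ℝ) ≤ a := Nat.cast_nonneg _
  have hnn : (0:ℝ) ≤ n := Nat.cast_nonneg _
  have haRn : (a:ℝ) ≤ n := by exact_mod_cast haN
  have P1 : (n:ℝ) * ((a:ℝ)*a - a) * C2 ≤ (a:ℝ)^2 * (((k:ℝ)-1) * C1) := by
    rw [hid2]
    have : (n:ℝ) * ((a:ℝ)*a - a) ≤ (a:ℝ)^2 * ((n:ℝ) - 1) := by nlinarith
    nlinarith
  have hP2a : (k:ℝ)^2*(a:ℝ)^2*N = (k:ℝ)*(a:ℝ)^2*(n:ℝ)*C1 := by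
    linear_combination ((k:ℝ)*(a:ℝ)^2) * hid1
  have hP2b : (N:ℝ)*k*a*((n:ℝ)-a) = (n:ℝ)*C1*a*((n:ℝ)-a) := by
    linear_combination ((a:ℝ)*((n:ℝ)-a)) * hid1
  have P1n := mul_le_mul_of_nonneg_left P1 hnn
  clear expand hS1 hS2 hid2 P1
  clear_value P a N C1 C2
  clear hP ha hN hC1 hC2 A
  nlinarith [P1n, hP2a, hP2b]

lemma key_count {n k : ℕ} (hk1 : 1 ≤ k) (hkn : k ≤ n) (A : Finset (Fin n))
    (h2a : 2 * A.card ≤ n) :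
    ((n : ℝ) - 2 * A.card) *
      (((powersetCard k (univ : Finset (Fin n))).filter
          (fun C => k ≤ 2 * (C ∩ A).card)).card : ℝ)
      ≤ (6 * Real.exp (-(1/2:ℝ)) / Real.sqrt k) * A.card * (n.choose k : ℝ) := by
  set ε := 6 * Real.exp (-(1/2:ℝ)) / Real.sqrt k with hε
  have hεpos : 0 < ε := eps_pos hk1
  set P := powersetCard k (univ : Finset (Fin n)) with hP
  set F := P.filter (fun C => k ≤ 2 * (C ∩ A).card) with hF
  set a := A.card with ha
  set N := n.choose k with hN
  have haN : a ≤ n := by rw [ha]; simpa using card_le_card (subset_univ A)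
  have hSN : F.card ≤ N := by
    calc F.card ≤ P.card := card_le_card (filter_subset _ _)
      _ = N := by rw [hP, card_powersetCard, card_univ, Fintype.card_fin, hN]
  have hd0 : (0:ℝ) ≤ (n:ℝ) - 2*a := by
    have : (2*a:ℝ) ≤ n := by exact_mod_cast h2a
    linarith
  have hann : (0:ℝ) ≤ (a:ℝ) := Nat.cast_nonneg _
  have hNnn : (0:ℝ) ≤ (N:ℝ) := Nat.cast_nonneg _
  have hSnn : (0:ℝ) ≤ (F.card:ℝ) := Nat.cast_nonneg _
  rcases le_or_gt ((n:ℝ) - 2*a) (ε * a) with hA | hB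
  · -- easy case: d ≤ εa
    calc ((n:ℝ) - 2*a) * F.card ≤ (ε * a) * F.card := by
          exact mul_le_mul_of_nonneg_right hA hSnn
      _ ≤ (ε * a) * N := by
          apply mul_le_mul_of_nonneg_left _ (by positivity)
          exact_mod_cast hSN
      _ = ε * a * N := by ring
  · rcases le_or_gt k 2 with hk2 | hk3
    · -- k ≤ 2 : F.card ≤ ∑ M = a * C1 and n * C1 relates
      have hFle : F.card ≤ ∑ C ∈ P, (C ∩ A).card := by
        calc F.card = ∑ C ∈ F, 1 := by simp
          _ ≤ ∑ C ∈ F, (C ∩ A).card := by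
              apply sum_le_sum
              intro C hC
              rw [hF, mem_filter] at hC
              omega
          _ ≤ ∑ C ∈ P, (C ∩ A).card := by
              apply sum_le_sum_of_subset (filter_subset _ _)
      rw [sum_M hk1 A, ← ha] at hFle
      -- d·S ≤ n·S ≤ n·a·C1 = a·k·N ≤ ε a N
      have hid : (k:ℝ) * N = n * ((n-1).choose (k-1) : ℝ) := by
        exact_mod_cast congrArg (Nat.cast (R := ℝ)) (choose_id1 hk1 hkn)
      have hkε : (k:ℝ) ≤ ε := eps_ge_k hk1 hk2
      calc ((n:ℝ) - 2*a) * F.card ≤ (n:ℝ) * F.card := by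
            apply mul_le_mul_of_nonneg_right _ hSnn
            linarith
        _ ≤ (n:ℝ) * (a * ((n-1).choose (k-1) : ℝ)) := by
            apply mul_le_mul_of_nonneg_left _ (Nat.cast_nonneg _)
            exact_mod_cast hFle
        _ = (a:ℝ) * ((k:ℝ) * N) := by rw [hid]; ring
        _ ≤ (a:ℝ) * (ε * N) := by
            apply mul_le_mul_of_nonneg_left _ hann
            exact mul_le_mul_of_nonneg_right hkε hNnn
        _ = ε * a * N := by ring
    · -- k ≥ 3 : Chebyshev
      have hvar := var_bound (by omega) hkn A
      rw [← ha, ← hN, ← hP] at hvar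
      have hcheb : (F.card:ℝ) * ((k:ℝ) * ((n:ℝ) - 2*a))^2
          ≤ 4 * ((N:ℝ) * k * a * ((n:ℝ) - a)) := by
        have step1 : (F.card:ℝ) * ((k:ℝ) * ((n:ℝ) - 2*a))^2
            ≤ ∑ C ∈ F, (2 * ((n:ℝ) * (C ∩ A).card - k * a))^2 := by
          rw [card_eq_sum_ones F]
          push_cast
          rw [sum_mul]
          apply sum_le_sum
          intro C hC
          rw [hF, mem_filter] at hC
          have hM : (k:ℝ) ≤ 2 * ((C ∩ A).card : ℝ) := by exact_mod_cast hC.2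
          have hnR : (0:ℝ) ≤ (n:ℝ) := Nat.cast_nonneg _
          have key : (k:ℝ) * ((n:ℝ) - 2*a) ≤ 2 * ((n:ℝ) * (C ∩ A).card - k * a) := by
            have hkn' : (k:ℝ) ≤ n := by exact_mod_cast hkn
            nlinarith [hM]
          have h1 : (0:ℝ) ≤ (k:ℝ) * ((n:ℝ) - 2*a) := by positivity
          rw [one_mul]
          exact pow_le_pow_left₀ h1 key 2
        have step2 : ∑ C ∈ F, (2 * ((n:ℝ) * (C ∩ A).card - k * a))^2
            ≤ ∑ C ∈ P, (2 * ((n:ℝ) * (C ∩ A).card - k * a))^2 := by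
          apply sum_le_sum_of_subset_of_nonneg (filter_subset _ _)
          intros; positivity
        have step3 : ∑ C ∈ P, (2 * ((n:ℝ) * (C ∩ A).card - k * a))^2
            = 4 * ∑ C ∈ P, ((n:ℝ) * (C ∩ A).card - k * a)^2 := by
          rw [mul_sum]; apply sum_congr rfl; intros; ring
        calc (F.card:ℝ) * ((k:ℝ) * ((n:ℝ) - 2*a))^2 ≤ _ := step1
          _ ≤ _ := step2
          _ = 4 * ∑ C ∈ P, ((n:ℝ) * (C ∩ A).card - k * a)^2 := step3
          _ ≤ 4 * ((N:ℝ) * k * a * ((n:ℝ) - a)) := by linarith [hvar]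
      -- now conclude
      have hcond := eps_cond3 hk3
      rw [← hε] at hcond
      set d : ℝ := (n:ℝ) - 2*a with hdd
      have hdpos : 0 < d := lt_of_le_of_lt (by positivity) hB
      have hkpos : (0:ℝ) < k := by exact_mod_cast (by omega : 0 < k)
      have hna : (n:ℝ) - a = d + a := by rw [hdd]; ring
      have hAx : ε * a < d := hB
      have hBx : 4*d + 4*(ε*d) ≤ (k:ℝ)*ε^2*d := by
        nlinarith [mul_le_mul_of_nonneg_right hcond (le_of_lt hdpos)]
      have hstep : 4*(d+a) ≤ ε*(k:ℝ)*d := by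
        nlinarith [hAx, hBx, hεpos]
      have main : (F.card:ℝ) * ((k:ℝ)^2*d^2) ≤ (ε*a*N)*((k:ℝ)^2*d) := by
        calc (F.card:ℝ) * ((k:ℝ)^2*d^2) = (F.card:ℝ) * ((k:ℝ)*d)^2 := by ring
          _ ≤ 4 * ((N:ℝ) * k * a * (d + a)) := by rw [← hna]; exact hcheb
          _ = ((N:ℝ) * k * a) * (4*(d+a)) := by ring
          _ ≤ ((N:ℝ) * k * a) * (ε*(k:ℝ)*d) := by
              apply mul_le_mul_of_nonneg_left hstep
              positivity
          _ = (ε*a*N)*((k:ℝ)^2*d) := by ring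
      have hpos2 : (0:ℝ) < (k:ℝ)^2*d := by positivity
      have heq : d*(F.card:ℝ)*((k:ℝ)^2*d) = (F.card:ℝ)*((k:ℝ)^2*d^2) := by ring
      apply le_of_mul_le_mul_right _ hpos2
      linarith [main]

lemma tf_sum {n m : ℕ} (X : Fin n → Fin m → Bool) (j : Fin m) :
    trueCount X j + falseCount X j = n := by
  rw [trueCount, falseCount]
  have h := Finset.card_filter_add_card_filter_not (s := (univ : Finset (Fin n)))
    (p := fun i => X i j = true)
  simp only [Bool.not_eq_true, card_univ, Fintype.card_fin] at h
  exact h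

lemma SC_eq {n m : ℕ} (X : Fin n → Fin m → Bool) (z : Fin m → Bool) :
    SC X z = ∑ j, (if z j = true then falseCount X j else trueCount X j) := by
  rw [SC]
  have h : ∀ i, hamming (X i) z = ∑ j, (if X i j ≠ z j then 1 else 0) := by
    intro i; rw [hamming, card_filter]
  rw [Finset.sum_congr rfl (fun i _ => h i), Finset.sum_comm]
  apply Finset.sum_congr rfl
  intro j _
  rcases Bool.eq_false_or_eq_true (z j) with hz | hz
  · rw [hz, if_pos rfl, falseCount, card_filter]
    apply sum_congr rfl
    intro i _
    simp only [hz, ne_eq, Bool.not_eq_true]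
  · rw [hz, if_neg (by simp), trueCount, card_filter]
    apply sum_congr rfl
    intro i _
    simp only [hz, ne_eq, Bool.not_eq_false]

lemma optCost_eq {n m : ℕ} (X : Fin n → Fin m → Bool) :
    optCost X = ∑ j, min (trueCount X j) (falseCount X j) := by
  apply le_antisymm
  · have := Finset.inf'_le (fun z : Fin m → Bool => SC X z)
      (Finset.mem_univ (fun j => decide (falseCount X j ≤ trueCount X j)))
    refine le_trans this ?_
    rw [SC_eq]
    apply le_of_eq
    apply sum_congr rfl
    intro j _
    by_cases h : falseCount X j ≤ trueCount X j
    · simp [h, min_eq_right h]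
    · simp [h, min_eq_left (by omega : trueCount X j ≤ falseCount X j)]
  · apply Finset.le_inf'
    intro z _
    rw [SC_eq]
    apply sum_le_sum
    intro j _
    by_cases h : z j = true <;> simp [h, min_le_left, min_le_right]

lemma cost_bound {n k : ℕ} (hk1 : 1 ≤ k) (hkn : k ≤ n) (A : Finset (Fin n))
    (h2a : 2 * A.card ≤ n) (c : Finset (Fin n) → ℝ)
    (hc : ∀ C ∈ powersetCard k (univ : Finset (Fin n)),
      c C ≤ A.card + ((n:ℝ) - 2 * A.card) * (if k ≤ 2 * (C ∩ A).card then 1 else 0)) :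
    ∑ C ∈ powersetCard k (univ : Finset (Fin n)), c C
      ≤ (1 + 6 * Real.exp (-(1/2:ℝ)) / Real.sqrt k) * A.card * (n.choose k : ℝ) := by
  set P := powersetCard k (univ : Finset (Fin n)) with hP
  have hNP : (P.card : ℝ) = (n.choose k : ℝ) := by
    rw [hP, card_powersetCard, card_univ, Fintype.card_fin]
  calc ∑ C ∈ P, c C
      ≤ ∑ C ∈ P, ((A.card:ℝ) + ((n:ℝ) - 2 * A.card) * (if k ≤ 2 * (C ∩ A).card then 1 else 0)) :=
        sum_le_sum hc
    _ = (A.card:ℝ) * (n.choose k : ℝ)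
        + ((n:ℝ) - 2 * A.card) * ((P.filter (fun C => k ≤ 2 * (C ∩ A).card)).card : ℝ) := by
        rw [sum_add_distrib, sum_const, ← mul_sum, Finset.sum_boole, nsmul_eq_mul, hNP]
        ring
    _ ≤ (A.card:ℝ) * (n.choose k : ℝ)
        + (6 * Real.exp (-(1/2:ℝ)) / Real.sqrt k) * A.card * (n.choose k : ℝ) := by
        have := key_count hk1 hkn A h2a
        linarith
    _ = (1 + 6 * Real.exp (-(1/2:ℝ)) / Real.sqrt k) * A.card * (n.choose k : ℝ) := by ring

lemma per_issue {n m k : ℕ} (hk1 : 1 ≤ k) (hkn : k ≤ n) (X : Fin n → Fin m → Bool) (j : Fin m) :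
    ∑ C ∈ powersetCard k (univ : Finset (Fin n)),
      (if k < 2 * (C.filter fun i => X i j = true).card then (falseCount X j : ℝ)
       else if 2 * (C.filter fun i => X i j = true).card < k then (trueCount X j : ℝ)
       else (n : ℝ) / 2)
      ≤ (1 + 6 * Real.exp (-(1/2:ℝ)) / Real.sqrt k)
          * (min (trueCount X j) (falseCount X j)) * (n.choose k : ℝ) := by
  have htf := tf_sum X j
  set t := trueCount X j with ht
  set f := falseCount X j with hf
  have hAt : (univ.filter fun i => X i j = true).card = t := rfl
  have hAf : (univ.filter fun i => X i j = false).card = f := rfl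
  have hTset : ∀ C : Finset (Fin n),
      (C.filter fun i => X i j = true) = C ∩ (univ.filter fun i => X i j = true) := by
    intro C; ext x; simp [mem_filter, mem_inter]
  have hFset : ∀ C : Finset (Fin n),
      (C.filter fun i => X i j = false) = C ∩ (univ.filter fun i => X i j = false) := by
    intro C; ext x; simp [mem_filter, mem_inter]
  have hsplit : ∀ C ∈ powersetCard k (univ : Finset (Fin n)),
      (C.filter fun i => X i j = true).card + (C.filter fun i => X i j = false).card = k := by
    intro C hC
    have h := Finset.card_filter_add_card_filter_not (s := C)
      (p := fun i => X i j = true)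
    simp only [Bool.not_eq_true] at h
    rw [h]
    exact (mem_powersetCard.mp hC).2
  have hfn : (f:ℝ) = (n:ℝ) - t := by
    have h : (((t + f) : ℕ) : ℝ) = (n:ℝ) := by rw [htf]
    push_cast at h
    linarith
  rcases le_or_gt t f with hmin | hmin
  · -- minority = true side
    rw [min_eq_left hmin]
    apply cost_bound hk1 hkn (univ.filter fun i => X i j = true) (by rw [hAt]; omega)
    intro C hC
    rw [hAt, ← hTset C]
    set T := (C.filter fun i => X i j = true).card with hT
    have htn2 : (2*t:ℝ) ≤ (n:ℝ) := by exact_mod_cast (by omega : 2*t ≤ n)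
    by_cases h1 : k < 2 * T
    · rw [if_pos h1, if_pos (by omega)]
      linarith
    · rw [if_neg h1]
      by_cases h2 : 2 * T < k
      · rw [if_pos h2, if_neg (by omega)]
        norm_num
      · rw [if_neg h2, if_pos (by omega)]
        linarith
  · -- minority = false side
    rw [min_eq_right (le_of_lt hmin)]
    apply cost_bound hk1 hkn (univ.filter fun i => X i j = false) (by rw [hAf]; omega)
    intro C hC
    rw [hAf, ← hFset C]
    have hTF := hsplit C hC
    set T := (C.filter fun i => X i j = true).card with hT
    set Fc := (C.filter fun i => X i j = false).card with hFc
    have hfn2 : (2*f:ℝ) ≤ (n:ℝ) := by exact_mod_cast (by omega : 2*f ≤ n)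
    by_cases h1 : k < 2 * T
    · rw [if_pos h1]
      have hite : (0:ℝ) ≤ ((n:ℝ) - 2*f) * (if k ≤ 2 * Fc then 1 else 0) := by
        apply mul_nonneg (by linarith)
        split <;> norm_num
      linarith
    · rw [if_neg h1]
      by_cases h2 : 2 * T < k
      · rw [if_pos h2, if_pos (by omega)]
        linarith
      · rw [if_neg h2, if_pos (by omega)]
        linarith

theorem stmt4 (n m k : ℕ) (hk : 1 ≤ k) (hkn : k ≤ n) (hm : 1 ≤ m) :
    sortitionAR n m k ≤ 1 + 6 * Real.exp (-(1 / 2)) / Real.sqrt k := by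
  have hεpos : 0 < 6 * Real.exp (-(1/2:ℝ)) / Real.sqrt k := eps_pos hk
  rw [sortitionAR]
  apply ciSup_le
  intro X
  rw [ratio]
  split_ifs with h0
  · linarith
  · have hopt : (0:ℝ) < (optCost X : ℝ) := by
      exact_mod_cast Nat.pos_of_ne_zero h0
    rw [div_le_iff₀ hopt, sortitionCost]
    have hN : (0:ℝ) < (n.choose k : ℝ) := by exact_mod_cast Nat.choose_pos hkn
    rw [div_le_iff₀ hN]
    calc ∑ C ∈ powersetCard k (univ : Finset (Fin n)), ∑ j : Fin m,
          (if k < 2 * (C.filter fun i => X i j = true).card then (falseCount X j : ℝ)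
           else if 2 * (C.filter fun i => X i j = true).card < k then (trueCount X j : ℝ)
           else (n : ℝ) / 2)
        = ∑ j : Fin m, ∑ C ∈ powersetCard k (univ : Finset (Fin n)),
          (if k < 2 * (C.filter fun i => X i j = true).card then (falseCount X j : ℝ)
           else if 2 * (C.filter fun i => X i j = true).card < k then (trueCount X j : ℝ)
           else (n : ℝ) / 2) := Finset.sum_comm
      _ ≤ ∑ j : Fin m, (1 + 6 * Real.exp (-(1/2:ℝ)) / Real.sqrt k)
            * (min (trueCount X j) (falseCount X j)) * (n.choose k : ℝ) :=
          sum_le_sum (fun j _ => per_issue hk hkn X j)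
      _ = (1 + 6 * Real.exp (-(1 / 2)) / Real.sqrt k) * (optCost X : ℝ) * (n.choose k : ℝ) := by
          rw [optCost_eq X]
          push_cast
          rw [← sum_mul, ← mul_sum]

end
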